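/- Let ρ > 0, C₀ > 0, δ ∈ (0,1), and let α, β : [0,1] → ℂ be continuous with Re α(s) > ρ and |β(s)| ≤ C₀ for all s. Then there exist C₁ > 0 and t₁ > 0 depending only on C₀, ρ, δ such that: for any ε > 0, any t ≥ t₁, and any C¹ function f : [0,1] → ℂ satisfying sup|f| + sup|f′ + (tα+β)f| ≤ ε, one has sup_{s ∈ [δ,1]} |f(s)| ≤ C₁·ε·(1+t)⁻¹. -/

import Mathlib

open Set Complex MeasureTheory intervalIntegral

set_option maxHeartbeats 1000000 in
/-- Singular perturbation estimate: if Re α > ρ on [0,1], |β| ≤ C₀, then there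
exist C₁, t₁ > 0 depending only on C₀, ρ, δ such that for any t ≥ t₁ and any C¹
function f with sup|f| + sup|f′+(tα+β)f| ≤ ε (encoded via bounds ε₁ + ε₂ ≤ ε),
one has |f| ≤ C₁·ε·(1+t)⁻¹ on [δ,1]. -/
theorem singular_perturbation_estimate (ρ C₀ δ : ℝ)
    (hρ : 0 < ρ) (hC₀ : 0 < C₀) (hδ : δ ∈ Set.Ioo (0 : ℝ) 1) :
    ∃ C₁ > (0 : ℝ), ∃ t₁ > (0 : ℝ),
      ∀ (α β : ℝ → ℂ), ContinuousOn α (Set.Icc 0 1) →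
        ContinuousOn β (Set.Icc 0 1) →
        (∀ s ∈ Set.Icc (0 : ℝ) 1, ρ < (α s).re) →
        (∀ s ∈ Set.Icc (0 : ℝ) 1, ‖β s‖ ≤ C₀) →
        ∀ ε > (0 : ℝ), ∀ t ≥ t₁, ∀ (f f' : ℝ → ℂ),
          (∀ s ∈ Set.Icc (0 : ℝ) 1, HasDerivAt f (f' s) s) →
          ∀ ε₁ ε₂ : ℝ,
            (∀ s ∈ Set.Icc (0 : ℝ) 1, ‖f s‖ ≤ ε₁) →
            (∀ s ∈ Set.Icc (0 : ℝ) 1,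
              ‖f' s + ((t : ℂ) * α s + β s) * f s‖ ≤ ε₂) →
            ε₁ + ε₂ ≤ ε →
            ∀ s ∈ Set.Icc δ 1, ‖f s‖ ≤ C₁ * ε * (1 + t)⁻¹ := by
  obtain ⟨hδ0, hδ1⟩ := hδ
  refine ⟨4 / (ρ * δ), by positivity, max 1 (2 * (C₀ + 1) / ρ),
    lt_of_lt_of_le one_pos (le_max_left _ _), ?_⟩
  intro α β hαc hβc hα hβ ε hε t ht f f' hf ε₁ ε₂ hε₁ hε₂ hsum s hs
  have ht1 : (1 : ℝ) ≤ t := le_trans (le_max_left _ _) ht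
  have ht0 : (0 : ℝ) < t := lt_of_lt_of_le one_pos ht1
  have ht2 : 2 * (C₀ + 1) / ρ ≤ t := le_trans (le_max_right _ _) ht
  set lam : ℝ := t * ρ - C₀ with hlam_def
  have htρ : 2 * (C₀ + 1) ≤ t * ρ := by
    rw [div_le_iff₀ hρ] at ht2; linarith
  have hlam_ge : t * ρ / 2 + 1 ≤ lam := by simp only [hlam_def]; linarith
  have hlam_pos : 0 < lam := by nlinarith
  have hlam_big : ρ / 4 * (1 + t) ≤ lam := by nlinarith
  have h01 : (0 : ℝ) ∈ Icc (0 : ℝ) 1 := ⟨le_refl _, zero_le_one⟩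
  have hε₁0 : 0 ≤ ε₁ := le_trans (norm_nonneg _) (hε₁ 0 h01)
  have hε₂0 : 0 ≤ ε₂ := le_trans (norm_nonneg _) (hε₂ 0 h01)
  -- the projection onto [0,1]
  set q : ℝ → ℝ := fun u => max 0 (min 1 u) with hq_def
  have hqc : Continuous q := continuous_const.max (continuous_const.min continuous_id)
  have hqmem : ∀ u, q u ∈ Icc (0 : ℝ) 1 :=
    fun u => ⟨le_max_left _ _, max_le zero_le_one (min_le_left _ _)⟩
  have hqid : ∀ u ∈ Icc (0 : ℝ) 1, q u = u := by
    intro u hu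
    simp only [hq_def]
    rw [min_eq_right hu.2, max_eq_right hu.1]
  -- the extended coefficient
  set c : ℝ → ℂ := fun u => (t : ℂ) * α (q u) + β (q u) with hc_def
  have hcc : Continuous c := by
    have h1 : Continuous fun u => α (q u) := hαc.comp_continuous hqc hqmem
    have h2 : Continuous fun u => β (q u) := hβc.comp_continuous hqc hqmem
    exact (continuous_const.mul h1).add h2
  have hceq : ∀ u ∈ Icc (0 : ℝ) 1, c u = (t : ℂ) * α u + β u := by
    intro u hu; simp only [hc_def, hqid u hu]
  have hcre : ∀ u, lam ≤ (c u).re := by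
    intro u
    have hα' := hα (q u) (hqmem u)
    have hβ' := hβ (q u) (hqmem u)
    have h1 : -C₀ ≤ (β (q u)).re := by
      have h2 : |(β (q u)).re| ≤ ‖β (q u)‖ := Complex.abs_re_le_norm _
      have := abs_le.mp (le_trans h2 hβ')
      linarith [this.1]
    have h3 : (c u).re = t * (α (q u)).re + (β (q u)).re := by
      simp [hc_def, Complex.add_re, Complex.mul_re]
    rw [h3]
    have h4 : t * ρ ≤ t * (α (q u)).re :=
      mul_le_mul_of_nonneg_left (le_of_lt hα') (le_of_lt ht0)
    simp only [hlam_def]; linarith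
  -- the integrating factor
  set I : ℝ → ℂ := fun u => ∫ v in (0 : ℝ)..u, c v with hI_def
  have hIint : ∀ a b : ℝ, IntervalIntegrable c volume a b :=
    fun a b => hcc.intervalIntegrable a b
  have hIderiv : ∀ u, HasDerivAt I (c u) u := by
    intro u
    exact intervalIntegral.integral_hasDerivAt_right (hIint 0 u)
      hcc.aestronglyMeasurable.stronglyMeasurableAtFilter hcc.continuousAt
  set E : ℝ → ℂ := fun u => Complex.exp (I u) with hE_def
  have hEderiv : ∀ u, HasDerivAt E (Complex.exp (I u) * c u) u :=
    fun u => (hIderiv u).cexp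
  have hEnorm : ∀ u, ‖E u‖ = Real.exp ((I u).re) := by
    intro u; simp [hE_def, Complex.norm_exp]
  have hEcont : Continuous E := by
    have hIc : Continuous I := by
      apply continuous_iff_continuousAt.mpr
      exact fun u => (hIderiv u).continuousAt
    exact Complex.continuous_exp.comp hIc
  -- key monotonicity of Re I
  have hIkey : ∀ u v : ℝ, u ≤ v → (I u).re + lam * (v - u) ≤ (I v).re := by
    intro u v huv
    have hsub : I v - I u = ∫ w in u..v, c w := by
      simp only [hI_def]
      exact intervalIntegral.integral_interval_sub_left (hIint 0 v) (hIint 0 u)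
    have hre : (I v).re - (I u).re = ∫ w in u..v, (c w).re := by
      have h5 := congrArg Complex.re hsub
      rw [Complex.sub_re] at h5
      rw [h5, intervalIntegral.integral_of_le huv, intervalIntegral.integral_of_le huv]
      have h6 := (hIint u v).def'
      rw [Set.uIoc_of_le huv] at h6
      exact (integral_re h6).symm
    have hmono : (∫ w in u..v, lam) ≤ ∫ w in u..v, (c w).re := by
      apply intervalIntegral.integral_mono_on huv intervalIntegrable_const
        ((Complex.continuous_re.comp hcc).intervalIntegrable u v)
      intro x _; exact hcre x
    rw [intervalIntegral.integral_const, smul_eq_mul] at hmono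
    linarith
  -- set up interval [a, s]
  obtain ⟨hsδ, hs1⟩ := hs
  set a : ℝ := s - δ with ha_def
  have ha0 : 0 ≤ a := by simp only [ha_def]; linarith
  have has : a ≤ s := by simp only [ha_def]; linarith
  have ha01 : a ∈ Icc (0 : ℝ) 1 := ⟨ha0, by simp only [ha_def]; linarith⟩
  have hsub01 : Icc a s ⊆ Icc (0 : ℝ) 1 := fun x hx => ⟨le_trans ha0 hx.1, le_trans hx.2 hs1⟩
  -- derivative of E * f on [a, s]
  set g : ℝ → ℂ := fun u => f' u + c u * f u with hg_def
  have hgbound : ∀ u ∈ Icc (0 : ℝ) 1, ‖g u‖ ≤ ε₂ := by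
    intro u hu
    have h := hε₂ u hu
    show ‖f' u + c u * f u‖ ≤ ε₂
    rw [hceq u hu]
    exact h
  have hhd : ∀ u ∈ Icc a s, HasDerivAt (fun w => E w * f w) (E u * g u) u := by
    intro u hu
    have h7 := (hEderiv u).mul (hf u (hsub01 hu))
    refine h7.congr_deriv ?_
    simp only [hg_def, hE_def]
    ring
  -- integrability of the derivative
  obtain ⟨M, hM⟩ := isCompact_Icc.exists_bound_of_continuousOn
    (hEcont.continuousOn : ContinuousOn E (Icc a s))
  have hder_int : IntervalIntegrable (fun u => E u * g u) volume a s := by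
    rw [intervalIntegrable_iff_integrableOn_Ioc_of_le has]
    have haes : AEStronglyMeasurable (fun u => E u * g u) (volume.restrict (Ioc a s)) := by
      have h0 : AEStronglyMeasurable (deriv fun w => E w * f w)
          (volume.restrict (Ioc a s)) :=
        (stronglyMeasurable_deriv _).aestronglyMeasurable.restrict
      apply h0.congr
      filter_upwards [ae_restrict_mem measurableSet_Ioc] with x hx
      exact (hhd x (Ioc_subset_Icc_self hx)).deriv
    refine ⟨haes, HasFiniteIntegral.restrict_of_bounded (M * ε₂) measure_Ioc_lt_top ?_⟩
    filter_upwards [ae_restrict_mem measurableSet_Ioc] with x hx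
    rw [norm_mul]
    exact mul_le_mul (hM x (Ioc_subset_Icc_self hx))
      (hgbound x (hsub01 (Ioc_subset_Icc_self hx))) (norm_nonneg _)
      (le_trans (norm_nonneg _) (hM x (Ioc_subset_Icc_self hx)))
  -- FTC
  have hftc : (∫ u in a..s, E u * g u) = E s * f s - E a * f a := by
    apply intervalIntegral.integral_eq_sub_of_hasDerivAt
    · intro x hx
      rw [Set.uIcc_of_le has] at hx
      exact hhd x hx
    · exact hder_int
  -- the bounding function
  set B : ℝ → ℝ := fun u => Real.exp ((I s).re - lam * (s - u)) * ε₂ with hB_def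
  have hBcont : Continuous B := by
    apply Continuous.mul _ continuous_const
    apply Real.continuous_exp.comp
    exact continuous_const.sub (continuous_const.mul (continuous_const.sub continuous_id))
  have hBbound : ∀ u ∈ Icc a s, ‖E u * g u‖ ≤ B u := by
    intro u hu
    rw [norm_mul, hEnorm]
    have h1 : ‖g u‖ ≤ ε₂ := hgbound u (hsub01 hu)
    have h2 : (I u).re ≤ (I s).re - lam * (s - u) := by
      have := hIkey u s hu.2; linarith
    exact mul_le_mul (Real.exp_le_exp.mpr h2) h1 (norm_nonneg _) (Real.exp_pos _).le
  -- compute the integral of B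
  set K : ℝ := Real.exp ((I s).re) * ε₂ with hK_def
  have hK0 : 0 ≤ K := mul_nonneg (Real.exp_pos _).le hε₂0
  have hBint : (∫ u in a..s, B u) = K * ((1 - Real.exp (lam * (a - s))) / lam) := by
    have hanti : ∀ u ∈ Set.uIcc a s,
        HasDerivAt (fun w => K * (Real.exp (lam * (w - s)) / lam)) (B u) u := by
      intro u _
      have h1 : HasDerivAt (fun w : ℝ => lam * (w - s)) lam u := by
        simpa using ((hasDerivAt_id u).sub_const s).const_mul lam
      have h2 := ((h1.exp).div_const lam).const_mul K
      refine h2.congr_deriv ?_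
      rw [hB_def, hK_def]
      have h3 : (I s).re - lam * (s - u) = (I s).re + lam * (u - s) := by ring
      simp only
      rw [h3, Real.exp_add]
      field_simp
    rw [intervalIntegral.integral_eq_sub_of_hasDerivAt hanti (hBcont.intervalIntegrable a s)]
    rw [sub_self, mul_zero, Real.exp_zero]
    ring
  have hBint_le : (∫ u in a..s, B u) ≤ K / lam := by
    rw [hBint]
    have h1 : 0 < Real.exp (lam * (a - s)) := Real.exp_pos _
    have h2 : (1 - Real.exp (lam * (a - s))) / lam ≤ 1 / lam := by
      gcongr
      linarith
    calc K * ((1 - Real.exp (lam * (a - s))) / lam) ≤ K * (1 / lam) :=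
          mul_le_mul_of_nonneg_left h2 hK0
      _ = K / lam := by ring
  have hBint_nonneg : 0 ≤ ∫ u in a..s, B u := by
    apply intervalIntegral.integral_nonneg has
    intro u _
    exact mul_nonneg (Real.exp_pos _).le hε₂0
  -- norm of the integral
  have hnormint : ‖∫ u in a..s, E u * g u‖ ≤ K / lam := by
    have h1 : ∀ᵐ u ∂volume.restrict (Set.uIoc a s), ‖E u * g u‖ ≤ B u := by
      rw [Set.uIoc_of_le has]
      filter_upwards [ae_restrict_mem measurableSet_Ioc] with x hx
      exact hBbound x (Ioc_subset_Icc_self hx)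
    have h2 := intervalIntegral.norm_integral_le_abs_of_norm_le h1 (hBcont.intervalIntegrable a s)
    rw [_root_.abs_of_nonneg hBint_nonneg] at h2
    exact h2.trans hBint_le
  -- main estimate
  have hfa : ‖E a * f a‖ ≤ Real.exp ((I s).re) * (Real.exp (-(lam * δ)) * ε₁) := by
    rw [norm_mul, hEnorm]
    have h1 : (I a).re ≤ (I s).re - lam * δ := by
      have := hIkey a s has
      have h2 : s - a = δ := by simp only [ha_def]; ring
      rw [h2] at this; linarith
    have h3 : Real.exp ((I a).re) ≤ Real.exp ((I s).re) * Real.exp (-(lam * δ)) := by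
      rw [← Real.exp_add]
      apply Real.exp_le_exp.mpr
      linarith
    calc Real.exp ((I a).re) * ‖f a‖
        ≤ (Real.exp ((I s).re) * Real.exp (-(lam * δ))) * ε₁ :=
          mul_le_mul h3 (hε₁ a ha01) (norm_nonneg _)
            (mul_nonneg (Real.exp_pos _).le (Real.exp_pos _).le)
      _ = Real.exp ((I s).re) * (Real.exp (-(lam * δ)) * ε₁) := by ring
  have hEsfs : E s * f s = E a * f a + ∫ u in a..s, E u * g u := by
    rw [hftc]; ring
  have hmain : Real.exp ((I s).re) * ‖f s‖ ≤
      Real.exp ((I s).re) * (Real.exp (-(lam * δ)) * ε₁ + ε₂ / lam) := by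
    have h1 : ‖E s * f s‖ ≤ ‖E a * f a‖ + ‖∫ u in a..s, E u * g u‖ := by
      rw [hEsfs]; exact norm_add_le _ _
    have h2 : ‖E s * f s‖ = Real.exp ((I s).re) * ‖f s‖ := by rw [norm_mul, hEnorm]
    have h3 : K / lam = Real.exp ((I s).re) * (ε₂ / lam) := by rw [hK_def]; ring
    rw [h2] at h1
    calc Real.exp ((I s).re) * ‖f s‖
        ≤ Real.exp ((I s).re) * (Real.exp (-(lam * δ)) * ε₁) +
            Real.exp ((I s).re) * (ε₂ / lam) := by
          rw [← h3]; exact h1.trans (add_le_add hfa hnormint)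
      _ = Real.exp ((I s).re) * (Real.exp (-(lam * δ)) * ε₁ + ε₂ / lam) := by ring
  have hfs : ‖f s‖ ≤ Real.exp (-(lam * δ)) * ε₁ + ε₂ / lam :=
    le_of_mul_le_mul_left hmain (Real.exp_pos _)
  -- final numeric estimates
  have hexp : Real.exp (-(lam * δ)) ≤ 1 / (lam * δ) := by
    rw [Real.exp_neg]
    have h1 : lam * δ < Real.exp (lam * δ) := by
      have := Real.add_one_le_exp (lam * δ); linarith
    rw [inv_eq_one_div]
    apply one_div_le_one_div_of_le (by positivity) h1.le
  have hld : 0 < lam * δ := by positivity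
  have h1t : (0 : ℝ) < 1 + t := by linarith
  have hstep1 : ‖f s‖ ≤ ε₁ / (lam * δ) + ε₂ / lam := by
    refine hfs.trans (add_le_add ?_ (le_refl _))
    calc Real.exp (-(lam * δ)) * ε₁ ≤ 1 / (lam * δ) * ε₁ :=
          mul_le_mul_of_nonneg_right hexp hε₁0
      _ = ε₁ / (lam * δ) := by ring
  have hstep2 : ε₁ / (lam * δ) + ε₂ / lam ≤ (ε₁ + ε₂) / (lam * δ) := by
    rw [div_add_div _ _ (ne_of_gt hld) (ne_of_gt hlam_pos), div_le_div_iff₀ (by positivity) hld]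
    have hδle : δ ≤ 1 := hδ1.le
    nlinarith [mul_nonneg (mul_nonneg (mul_nonneg hld.le hlam_pos.le) hε₂0)
      (by linarith : (0:ℝ) ≤ 1 - δ)]
  have hstep3 : (ε₁ + ε₂) / (lam * δ) ≤ ε / (lam * δ) := by gcongr
  have hstep4 : ε / (lam * δ) ≤ 4 / (ρ * δ) * ε * (1 + t)⁻¹ := by
    have h3 : ρ * (1 + t) ≤ 4 * lam := by linarith
    have h4 : 4 / (ρ * δ) * ε * (1 + t)⁻¹ = (4 * ε) / (ρ * δ * (1 + t)) := by
      field_simp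
    rw [h4, div_le_div_iff₀ hld (by positivity)]
    linarith [mul_le_mul_of_nonneg_left h3 (mul_nonneg (le_of_lt hε) hδ0.le)]
  linarith [hstep1, hstep2, hstep3, hstep4]
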